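/- For all β ∈ ℝᵐ, κ₀ > 0, and κ ∈ [0,∞)^r, the function l̃(β,κ₀,κ,y) = n log κ₀ + log det Ṽ(κ) + κ₀⁻¹ (y − Xβ)'Ṽ(κ)⁻¹(y − Xβ) is bounded below by n·log(s) − n·log(n) + n, where s = y'P_{(H+M)^⊥} y, provided y ∉ M(X,Z) (so that s > 0). -/

import Mathlib

open Matrix Filter

noncomputable def Vtilde {n r : ℕ} {k : Fin r → ℕ}
    (Z : ∀ i : Fin r, Matrix (Fin n) (Fin (k i)) ℝ) (κ : Fin r → ℝ) :
    Matrix (Fin n) (Fin n) ℝ :=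
  1 + ∑ i, κ i • (Z i * (Z i)ᵀ)

noncomputable def colSpaceXZ {n m r : ℕ} {k : Fin r → ℕ}
    (X : Matrix (Fin n) (Fin m) ℝ) (Z : ∀ i : Fin r, Matrix (Fin n) (Fin (k i)) ℝ) :
    Submodule ℝ (Fin n → ℝ) :=
  LinearMap.range X.mulVecLin ⊔ ⨆ i, LinearMap.range (Z i).mulVecLin

noncomputable def sXZ {n m r : ℕ} {k : Fin r → ℕ}
    (X : Matrix (Fin n) (Fin m) ℝ) (Z : ∀ i : Fin r, Matrix (Fin n) (Fin (k i)) ℝ)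
    (y : Fin n → ℝ) : ℝ :=
  let L : EuclideanSpace ℝ (Fin n) ≃ₗ[ℝ] (Fin n → ℝ) :=
    WithLp.linearEquiv 2 ℝ (Fin n → ℝ)
  let S : Submodule ℝ (EuclideanSpace ℝ (Fin n)) :=
    (colSpaceXZ X Z).map L.symm.toLinearMap
  ‖(Submodule.orthogonalProjectionOnto Sᗮ (L.symm y) : EuclideanSpace ℝ (Fin n))‖ ^ 2

noncomputable def ltilde {n m r : ℕ} {k : Fin r → ℕ}
    (X : Matrix (Fin n) (Fin m) ℝ) (Z : ∀ i : Fin r, Matrix (Fin n) (Fin (k i)) ℝ)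
    (y : Fin n → ℝ) (β : Fin m → ℝ) (κ₀ : ℝ) (κ : Fin r → ℝ) : ℝ :=
  n * Real.log κ₀ + Real.log (Vtilde Z κ).det
    + κ₀⁻¹ * ((y - X.mulVec β) ⬝ᵥ (Vtilde Z κ)⁻¹.mulVec (y - X.mulVec β))

open scoped RealInnerProductSpace


lemma csA {n : ℕ} {A : Matrix (Fin n) (Fin n) ℝ} (hA : A.PosSemidef) (u v : Fin n → ℝ) :
    (u ⬝ᵥ A *ᵥ v)^2 ≤ (u ⬝ᵥ A *ᵥ u) * (v ⬝ᵥ A *ᵥ v) := by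
  have hsymm : v ⬝ᵥ A *ᵥ u = u ⬝ᵥ A *ᵥ v := by
    rw [dotProduct_mulVec, ← mulVec_transpose, show Aᵀ = A from hA.1, dotProduct_comm]
  have key : ∀ t : ℝ, 0 ≤ (v ⬝ᵥ A *ᵥ v) * (t * t) + (2 * (u ⬝ᵥ A *ᵥ v)) * t + (u ⬝ᵥ A *ᵥ u) := by
    intro t
    have h := hA.dotProduct_mulVec_nonneg (u + t • v)
    rw [star_trivial] at h
    simp only [mulVec_add, mulVec_smul, add_dotProduct, dotProduct_add, smul_dotProduct,
      dotProduct_smul, smul_eq_mul] at h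
    rw [hsymm] at h; nlinarith [h]
  have hd := discrim_le_zero key
  rw [discrim] at hd
  nlinarith [hd]

lemma sum_psd {n r : ℕ} {k : Fin r → ℕ}
    (Z : ∀ i : Fin r, Matrix (Fin n) (Fin (k i)) ℝ) (κ : Fin r → ℝ) (hκ : ∀ i, 0 ≤ κ i) :
    (∑ i, κ i • (Z i * (Z i)ᵀ)).PosSemidef := by
  refine Finset.sum_induction _ Matrix.PosSemidef (fun a b ha hb => ha.add hb)
    Matrix.PosSemidef.zero (fun i _ => ?_)
  have h1 : (Z i * (Z i)ᵀ).PosSemidef := by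
    simpa using Matrix.posSemidef_self_mul_conjTranspose (Z i)
  refine Matrix.PosSemidef.of_dotProduct_mulVec_nonneg ?_ ?_
  · show (κ i • (Z i * (Z i)ᵀ))ᴴ = _
    rw [Matrix.conjTranspose_smul, h1.1, star_trivial]
  · intro x
    have := h1.dotProduct_mulVec_nonneg x
    simp only [smul_mulVec, dotProduct_smul, smul_eq_mul]
    exact mul_nonneg (hκ i) this

lemma Vtilde_posDef {n r : ℕ} {k : Fin r → ℕ}
    (Z : ∀ i : Fin r, Matrix (Fin n) (Fin (k i)) ℝ) (κ : Fin r → ℝ) (hκ : ∀ i, 0 ≤ κ i) :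
    (Vtilde Z κ).PosDef :=
  Matrix.PosDef.add_posSemidef Matrix.PosDef.one (sum_psd Z κ hκ)

lemma Vtilde_det_ge_one {n r : ℕ} {k : Fin r → ℕ}
    (Z : ∀ i : Fin r, Matrix (Fin n) (Fin (k i)) ℝ) (κ : Fin r → ℝ) (hκ : ∀ i, 0 ≤ κ i) :
    1 ≤ (Vtilde Z κ).det := by
  have hV := Vtilde_posDef Z κ hκ
  have hH := hV.isHermitian
  rw [hH.det_eq_prod_eigenvalues]
  have : ∀ i : Fin n, (1:ℝ) ≤ hH.eigenvalues i := ?_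
  · calc (1:ℝ) = ∏ _i : Fin n, 1 := by simp
      _ ≤ ∏ i, (hH.eigenvalues i : ℝ) := Finset.prod_le_prod (by simp) (by simpa using this)
  intro i
  have hv := hH.eigenvalues_eq i
  set v : Fin n → ℝ := ⇑(hH.eigenvectorBasis i) with hvdef
  have hnorm : star v ⬝ᵥ v = 1 := by
    have h1 : ‖hH.eigenvectorBasis i‖ = 1 := hH.eigenvectorBasis.orthonormal.1 i
    have h2 : (inner ℝ (hH.eigenvectorBasis i) (hH.eigenvectorBasis i) : ℝ) = star v ⬝ᵥ v := by
      rw [EuclideanSpace.inner_eq_star_dotProduct, dotProduct_comm]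
    rw [← h2, real_inner_self_eq_norm_sq, h1]; norm_num
  have hA := (sum_psd Z κ hκ).dotProduct_mulVec_nonneg v
  rw [hv]
  simp only [RCLike.re_to_real]
  unfold Vtilde
  rw [Matrix.add_mulVec, Matrix.one_mulVec, dotProduct_add, hnorm]
  simpa using hA

section Main
variable {n m r : ℕ} {k : Fin r → ℕ}
  (X : Matrix (Fin n) (Fin m) ℝ) (Z : ∀ i : Fin r, Matrix (Fin n) (Fin (k i)) ℝ)
  (y : Fin n → ℝ)

-- abbreviations
noncomputable def LL : EuclideanSpace ℝ (Fin n) ≃ₗ[ℝ] (Fin n → ℝ) :=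
  WithLp.linearEquiv 2 ℝ (Fin n → ℝ)

noncomputable def SS : Submodule ℝ (EuclideanSpace ℝ (Fin n)) :=
  (colSpaceXZ X Z).map (LL (n := n)).symm.toLinearMap

noncomputable def ww : EuclideanSpace ℝ (Fin n) :=
  (Submodule.orthogonalProjectionOnto (SS X Z)ᗮ ((LL (n := n)).symm y) : EuclideanSpace ℝ (Fin n))

lemma sXZ_eq : sXZ X Z y = ‖ww X Z y‖ ^ 2 := rfl

lemma ww_mem : ww X Z y ∈ (SS X Z)ᗮ := (Submodule.orthogonalProjectionOnto (SS X Z)ᗮ ((LL (n := n)).symm y)).2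

-- the underlying plain vector of ww
noncomputable def ww' : Fin n → ℝ := (LL (n := n)) (ww X Z y)

lemma dot_ww' (z : Fin n → ℝ) (hz : z ∈ colSpaceXZ X Z) : ww' X Z y ⬝ᵥ z = 0 := by
  have hmem : (LL (n := n)).symm z ∈ SS X Z := ⟨z, hz, rfl⟩
  have h := (ww_mem X Z y) ((LL (n := n)).symm z) hmem
  -- h : ⟪L.symm z, ww⟫ = 0
  rw [EuclideanSpace.inner_eq_star_dotProduct] at h
  rw [star_trivial] at h
  exact h

lemma Zt_ww' (i : Fin r) : (Z i)ᵀ *ᵥ ww' X Z y = 0 := by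
  apply dotProduct_eq_zero
  intro c
  have hz : (Z i) *ᵥ c ∈ colSpaceXZ X Z := by
    apply Submodule.mem_sup_right
    exact Submodule.mem_iSup_of_mem i ⟨c, rfl⟩
  have := dot_ww' X Z y ((Z i) *ᵥ c) hz
  rw [Matrix.dotProduct_mulVec, ← Matrix.mulVec_transpose] at this
  exact this

lemma sum_mulVec' {N : ℕ} {ι : Type*} [DecidableEq ι] (s : Finset ι) (A : ι → Matrix (Fin N) (Fin N) ℝ)
    (v : Fin N → ℝ) : (∑ i ∈ s, A i) *ᵥ v = ∑ i ∈ s, A i *ᵥ v := by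
  induction s using Finset.induction_on with
  | empty => simp
  | insert _ _ h ih => rw [Finset.sum_insert h, Finset.sum_insert h, Matrix.add_mulVec, ih]

lemma V_ww' (κ : Fin r → ℝ) : Vtilde Z κ *ᵥ ww' X Z y = ww' X Z y := by
  unfold Vtilde
  rw [Matrix.add_mulVec, Matrix.one_mulVec, sum_mulVec']
  have : ∀ i : Fin r, (κ i • (Z i * (Z i)ᵀ)) *ᵥ ww' X Z y = 0 := by
    intro i
    rw [Matrix.smul_mulVec, ← Matrix.mulVec_mulVec, Zt_ww', Matrix.mulVec_zero, smul_zero]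
  simp [this]

lemma Vinv_ww' (κ : Fin r → ℝ) (hκ : ∀ i, 0 ≤ κ i) :
    (Vtilde Z κ)⁻¹ *ᵥ ww' X Z y = ww' X Z y := by
  have hV := Vtilde_posDef Z κ hκ
  have hu : IsUnit (Vtilde Z κ).det := isUnit_iff_ne_zero.2 (ne_of_gt hV.det_pos)
  conv_lhs => rw [← V_ww' X Z y κ]
  rw [Matrix.mulVec_mulVec, Matrix.nonsing_inv_mul _ hu, Matrix.one_mulVec]

section Main2
variable {n m r : ℕ} {k : Fin r → ℕ}
  (X : Matrix (Fin n) (Fin m) ℝ) (Z : ∀ i : Fin r, Matrix (Fin n) (Fin (k i)) ℝ)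
  (y : Fin n → ℝ)

lemma dot_y_ww' : y ⬝ᵥ ww' X Z y = ‖ww X Z y‖ ^ 2 := by
  have h0 := Submodule.starProjection_inner_eq_zero ((LL (n := n)).symm y) (ww X Z y) (ww_mem X Z y)
  rw [inner_sub_left] at h0
  have h1 : (inner ℝ ((LL (n := n)).symm y) (ww X Z y) : ℝ) = y ⬝ᵥ ww' X Z y := by
    rw [EuclideanSpace.inner_eq_star_dotProduct, star_trivial, dotProduct_comm]; rfl
  have h2 : (inner ℝ (ww X Z y) (ww X Z y) : ℝ) = ‖ww X Z y‖ ^ 2 :=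
    real_inner_self_eq_norm_sq _
  have h3 : (inner ℝ ((SS X Z)ᗮ.starProjection ((LL (n := n)).symm y)) (ww X Z y) : ℝ) = ‖ww X Z y‖ ^ 2 := h2
  linarith [h0, h1, h3]

lemma ww'_dot_ww' : ww' X Z y ⬝ᵥ ww' X Z y = ‖ww X Z y‖ ^ 2 := by
  have h2 : (inner ℝ (ww X Z y) (ww X Z y) : ℝ) = ‖ww X Z y‖ ^ 2 :=
    real_inner_self_eq_norm_sq _
  rw [EuclideanSpace.inner_eq_star_dotProduct, star_trivial] at h2
  exact h2

lemma x_dot_ww' (β : Fin m → ℝ) :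
    (y - X.mulVec β) ⬝ᵥ ww' X Z y = ‖ww X Z y‖ ^ 2 := by
  have hmem : X.mulVec β ∈ colSpaceXZ X Z := Submodule.mem_sup_left ⟨β, rfl⟩
  have h1 : ww' X Z y ⬝ᵥ X.mulVec β = 0 := dot_ww' X Z y _ hmem
  rw [sub_dotProduct, dot_y_ww']
  rw [dotProduct_comm] at h1
  rw [h1, sub_zero]

lemma s_pos (hy : y ∉ colSpaceXZ X Z) : 0 < sXZ X Z y := by
  rw [sXZ_eq]
  have hne : ww X Z y ≠ 0 := by
    intro h0
    apply hy
    have hsub := Submodule.sub_starProjection_mem_orthogonal (K := (SS X Z)ᗮ)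
      ((LL (n := n)).symm y)
    rw [show (SS X Z)ᗮ.starProjection ((LL (n := n)).symm y) = ww X Z y from rfl, h0, sub_zero] at hsub
    rw [Submodule.orthogonal_orthogonal] at hsub
    obtain ⟨z, hz, hze⟩ := hsub
    have : z = y := by
      have := congrArg (LL (n := n)) hze
      simpa using this
    rwa [← this]
  exact pow_pos (norm_pos_iff.mpr hne) 2

lemma quad_ge (β : Fin m → ℝ) (κ : Fin r → ℝ) (hκ : ∀ i, 0 ≤ κ i)
    (hy : y ∉ colSpaceXZ X Z) :
    sXZ X Z y ≤ (y - X.mulVec β) ⬝ᵥ (Vtilde Z κ)⁻¹ *ᵥ (y - X.mulVec β) := by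
  have hV := Vtilde_posDef Z κ hκ
  have hinv : (Vtilde Z κ)⁻¹.PosSemidef := hV.inv.posSemidef
  have cs := csA hinv (y - X.mulVec β) (ww' X Z y)
  rw [Vinv_ww' X Z y κ hκ, x_dot_ww', ww'_dot_ww'] at cs
  have hs := s_pos X Z y hy
  rw [sXZ_eq] at hs ⊢
  nlinarith [cs, hs]

end Main2

/-- Part (a): if `y ∉ M(X,Z)`, then `l̃ ≥ n log s_{X,Z} − n log n + n` everywhere. -/
theorem ltilde_lower_bound
    (n m r : ℕ) (k : Fin r → ℕ) (hmn : m < n) (hk : ∑ i, k i < n)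
    (X : Matrix (Fin n) (Fin m) ℝ) (Z : ∀ i : Fin r, Matrix (Fin n) (Fin (k i)) ℝ)
    (y : Fin n → ℝ) (hy : y ∉ colSpaceXZ X Z) :
    ∀ (β : Fin m → ℝ) (κ₀ : ℝ) (κ : Fin r → ℝ), 0 < κ₀ → (∀ i, 0 ≤ κ i) →
      (n : ℝ) * Real.log (sXZ X Z y) - n * Real.log n + n
        ≤ ltilde X Z y β κ₀ κ := by
  intro β κ₀ κ hκ₀ hκ
  have hs : 0 < sXZ X Z y := s_pos X Z y hy
  set s : ℝ := sXZ X Z y with hsdef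
  have hn : (0:ℝ) < n := by
    have : 0 < n := Nat.pos_of_ne_zero (by omega)
    exact_mod_cast this
  have hdet : (0:ℝ) ≤ Real.log (Vtilde Z κ).det :=
    Real.log_nonneg (Vtilde_det_ge_one Z κ hκ)
  have hQ : s ≤ (y - X.mulVec β) ⬝ᵥ (Vtilde Z κ)⁻¹.mulVec (y - X.mulVec β) :=
    quad_ge X Z y β κ hκ hy
  have hQ' : κ₀⁻¹ * s ≤ κ₀⁻¹ * ((y - X.mulVec β) ⬝ᵥ (Vtilde Z κ)⁻¹.mulVec (y - X.mulVec β)) :=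
    mul_le_mul_of_nonneg_left hQ (inv_nonneg.mpr hκ₀.le)
  have hlog := Real.log_le_sub_one_of_pos (show 0 < s / (n * κ₀) by positivity)
  rw [Real.log_div (ne_of_gt hs) (by positivity), Real.log_mul (ne_of_gt hn) (ne_of_gt hκ₀)]
    at hlog
  have hmul : (n:ℝ) * (s / (n * κ₀)) = κ₀⁻¹ * s := by field_simp
  have key : (n : ℝ) * Real.log s - n * Real.log n + n ≤ n * Real.log κ₀ + κ₀⁻¹ * s := by
    have := mul_le_mul_of_nonneg_left hlog hn.le
    rw [mul_sub, mul_sub, hmul] at this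
    nlinarith [this]
  unfold ltilde
  linarith [key, hdet, hQ']
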